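/- Let R be a finite commutative local ring and f ∈ R[x] monic of degree n whose roots α_1, ..., α_n in an extension R' have pairwise distinct residues. Then the Mattson-Solomon transform MS_f : R[x]/⟨f⟩ → R'[x]/⟨f⟩ sending g(x) to Σ_{i=1}^n g(α_i) x^{i-1} is an injective ring homomorphism when the codomain is equipped with coordinatewise (Schur) multiplication of coefficient vectors. -/

import Mathlib

open Polynomial

theorem stmt_10 (R R' : Type*) [CommRing R] [Finite R] [IsLocalRing R]
    [CommRing R'] [Algebra R R'] (n : ℕ) (f : Polynomial R) (hf : f.Monic)
    (hdeg : f.natDegree = n) (α : Fin n → R')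
    (hroot : ∀ i : Fin n, Polynomial.aeval (α i) f = 0)
    (hsplit : f.map (algebraMap R R') = ∏ i : Fin n, (X - C (α i)))
    (hunit : ∀ i j : Fin n, i ≠ j → IsUnit (α i - α j))
    (hinj : Function.Injective (algebraMap R R')) :
    Function.Injective
      (Pi.ringHom fun i : Fin n =>
        (AdjoinRoot.liftAlgHom f (Algebra.ofId R R') (α i) (hroot i)).toRingHom :
          AdjoinRoot f →+* (Fin n → R')) := by
  rw [injective_iff_map_eq_zero]
  intro a ha
  obtain ⟨p, rfl⟩ := AdjoinRoot.mk_surjective a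
  have hroots : ∀ i : Fin n, aeval (α i) p = 0 := by
    intro i
    have := congrFun ha i
    exact this
  rw [AdjoinRoot.mk_eq_zero]
  rw [← Polynomial.map_dvd_map (algebraMap R R') hinj hf, hsplit]
  apply Finset.prod_dvd_of_coprime
  · intro i _ j _ hij
    exact Polynomial.isCoprime_X_sub_C_of_isUnit_sub (hunit i j hij)
  · intro i _
    rw [Polynomial.dvd_iff_isRoot]
    have := hroots i
    rwa [Polynomial.aeval_def, Polynomial.eval₂_eq_eval_map] at this
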